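/- arXiv:1806.05902 — 2 statements merged into one kernel-verified Lean document; each statement's English description precedes it below -/
import Mathlib

section
/- For every integer n ≥ 5, the commutator subgroup GVB_n' = [GVB_n, GVB_n] of the generalized virtual braid group GVB_n equals the subgroup of GVB_n generated by the 3n − 7 elements: α_{0,0,2} = σ_2 σ_1^{−1}, α_{1,0,2} = σ_1 σ_2 σ_1^{−2}, together with, for each j with 3 ≤ j ≤ n−1, the elements α_j = σ_j σ_1^{−1}, β_{0,j} = ρ_j ρ_1^{−1}, and β_{1,j} = σ_1 ρ_j ρ_1^{−1} σ_1^{−1}. -/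
namespace GVBAbs

variable {G : Type*} [Group G] (S0 S1 S2 R0 R1 R2 R3 Sj Rj : G)

/-- EqG -/
lemma keyG (cD : R2*S1*S2 = S1*S2*R1) (c02 : Commute S0 S2) (c2r : Commute S2 R0) :
    (S2*S0⁻¹)⁻¹*(S1*S0⁻¹)⁻¹*((R2*R0⁻¹)*((R0*S1*R0⁻¹*S0⁻¹)*(S2*S0⁻¹)))
      = S0*S0*(R1*R0⁻¹)*S0⁻¹*S0⁻¹ := by
  calc (S2*S0⁻¹)⁻¹*(S1*S0⁻¹)⁻¹*((R2*R0⁻¹)*((R0*S1*R0⁻¹*S0⁻¹)*(S2*S0⁻¹)))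
      = S0*S2⁻¹*S0*S1⁻¹*R2*S1*R0⁻¹*(S0⁻¹*S2)*S0⁻¹ := by group
    _ = S0*S2⁻¹*S0*S1⁻¹*R2*S1*R0⁻¹*(S2*S0⁻¹)*S0⁻¹ := by rw [c02.inv_left.eq]
    _ = S0*S2⁻¹*S0*S1⁻¹*R2*S1*(R0⁻¹*S2)*S0⁻¹*S0⁻¹ := by group
    _ = S0*S2⁻¹*S0*S1⁻¹*R2*S1*(S2*R0⁻¹)*S0⁻¹*S0⁻¹ := by rw [c2r.symm.inv_left.eq]
    _ = S0*S2⁻¹*S0*S1⁻¹*(R2*S1*S2)*R0⁻¹*S0⁻¹*S0⁻¹ := by group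
    _ = S0*S2⁻¹*S0*S1⁻¹*(S1*S2*R1)*R0⁻¹*S0⁻¹*S0⁻¹ := by rw [cD]
    _ = S0*(S2⁻¹*(S0*S2))*R1*R0⁻¹*S0⁻¹*S0⁻¹ := by group
    _ = S0*(S2⁻¹*(S2*S0))*R1*R0⁻¹*S0⁻¹*S0⁻¹ := by rw [c02.eq]
    _ = S0*S0*(R1*R0⁻¹)*S0⁻¹*S0⁻¹ := by group

/-- EqH -/
lemma keyH (cA : R0*S1*S0 = S1*S0*R1) (c0r2 : Commute S0 R2) :
    S0*(S0*R2*R0⁻¹*S0⁻¹)*S0⁻¹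
      = (S0*R2*R0⁻¹*S0⁻¹)*(R0*S1*R0⁻¹*S0⁻¹)⁻¹*((S1*S0⁻¹)*(S0*S0*(R1*R0⁻¹)*S0⁻¹*S0⁻¹)) := by
  symm
  calc (S0*R2*R0⁻¹*S0⁻¹)*(R0*S1*R0⁻¹*S0⁻¹)⁻¹*((S1*S0⁻¹)*(S0*S0*(R1*R0⁻¹)*S0⁻¹*S0⁻¹))
      = S0*R2*S1⁻¹*R0⁻¹*(S1*S0*R1)*R0⁻¹*S0⁻¹*S0⁻¹ := by group
    _ = S0*R2*S1⁻¹*R0⁻¹*(R0*S1*S0)*R0⁻¹*S0⁻¹*S0⁻¹ := by rw [← cA]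
    _ = S0*(R2*S0)*R0⁻¹*S0⁻¹*S0⁻¹ := by group
    _ = S0*(S0*R2)*R0⁻¹*S0⁻¹*S0⁻¹ := by rw [← c0r2.eq]
    _ = S0*(S0*R2*R0⁻¹*S0⁻¹)*S0⁻¹ := by group

/-- transport of `σ0 c_j σ0⁻¹` to `σ0 c_2 σ0⁻¹` -/
lemma keyT (c0j : Commute S0 Rj) (c02 : Commute S0 R2) :
    S0*(S0*Rj*R0⁻¹*S0⁻¹)*S0⁻¹
      = (Rj*R0⁻¹)*(R2*R0⁻¹)⁻¹*(S0*(S0*R2*R0⁻¹*S0⁻¹)*S0⁻¹) := by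
  calc S0*(S0*Rj*R0⁻¹*S0⁻¹)*S0⁻¹
      = S0*(S0*Rj)*R0⁻¹*S0⁻¹*S0⁻¹ := by group
    _ = S0*(Rj*S0)*R0⁻¹*S0⁻¹*S0⁻¹ := by rw [c0j.eq]
    _ = (S0*Rj)*S0*R0⁻¹*S0⁻¹*S0⁻¹ := by group
    _ = (Rj*S0)*S0*R0⁻¹*S0⁻¹*S0⁻¹ := by rw [c0j.eq]
    _ = Rj*(R2⁻¹*(R2*S0))*S0*R0⁻¹*S0⁻¹*S0⁻¹ := by group
    _ = Rj*(R2⁻¹*(S0*R2))*S0*R0⁻¹*S0⁻¹*S0⁻¹ := by rw [← c02.eq]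
    _ = Rj*R2⁻¹*S0*(R2*S0)*R0⁻¹*S0⁻¹*S0⁻¹ := by group
    _ = Rj*R2⁻¹*S0*(S0*R2)*R0⁻¹*S0⁻¹*S0⁻¹ := by rw [← c02.eq]
    _ = (Rj*R0⁻¹)*(R2*R0⁻¹)⁻¹*(S0*(S0*R2*R0⁻¹*S0⁻¹)*S0⁻¹) := by group

/-- σ0-conjugate of u -/
lemma keyU (c13 : Commute S1 R3) :
    S0*(R0*S1*R0⁻¹*S0⁻¹)*S0⁻¹
      = (S0*R3*R0⁻¹*S0⁻¹)⁻¹*((S0*S1*S0⁻¹*S0⁻¹)*(S0*(S0*R3*R0⁻¹*S0⁻¹)*S0⁻¹)) := by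
  symm
  calc (S0*R3*R0⁻¹*S0⁻¹)⁻¹*((S0*S1*S0⁻¹*S0⁻¹)*(S0*(S0*R3*R0⁻¹*S0⁻¹)*S0⁻¹))
      = S0*R0*(R3⁻¹*S1)*R3*R0⁻¹*S0⁻¹*S0⁻¹ := by group
    _ = S0*R0*(S1*R3⁻¹)*R3*R0⁻¹*S0⁻¹*S0⁻¹ := by rw [c13.inv_right.symm.eq]
    _ = S0*(R0*S1*R0⁻¹*S0⁻¹)*S0⁻¹ := by group

/-- EqF -/
lemma keyF (cC : R1*S2*S1 = S2*S1*R2) (c2r0 : Commute S2 R0) :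
    R1*R0⁻¹
      = (S2*S0⁻¹)*((S0*S1*S0⁻¹*S0⁻¹)*((S0*(S0*R2*R0⁻¹*S0⁻¹)*S0⁻¹)*
          ((S0*(R0*S1*R0⁻¹*S0⁻¹)*S0⁻¹)⁻¹*(S2*S0⁻¹)⁻¹))) := by
  symm
  calc (S2*S0⁻¹)*((S0*S1*S0⁻¹*S0⁻¹)*((S0*(S0*R2*R0⁻¹*S0⁻¹)*S0⁻¹)*
          ((S0*(R0*S1*R0⁻¹*S0⁻¹)*S0⁻¹)⁻¹*(S2*S0⁻¹)⁻¹)))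
      = (S2*S1*R2)*S1⁻¹*R0⁻¹*S2⁻¹ := by group
    _ = (R1*S2*S1)*S1⁻¹*R0⁻¹*S2⁻¹ := by rw [← cC]
    _ = R1*(S2*R0⁻¹)*S2⁻¹ := by group
    _ = R1*(R0⁻¹*S2)*S2⁻¹ := by rw [c2r0.inv_right.eq]
    _ = R1*R0⁻¹ := by group

/-- σ0+ on g2 -/
lemma keyPg2 (B : S0*S1*S0 = S1*S0*S1) :
    S0*(S0*S1*S0⁻¹*S0⁻¹)*S0⁻¹ = (S1*S0⁻¹)⁻¹*(S0*S1*S0⁻¹*S0⁻¹) := by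
  symm
  calc (S1*S0⁻¹)⁻¹*(S0*S1*S0⁻¹*S0⁻¹)
      = S0*S1⁻¹*(S0*S1*S0)*S0⁻¹*S0⁻¹*S0⁻¹ := by group
    _ = S0*S1⁻¹*(S1*S0*S1)*S0⁻¹*S0⁻¹*S0⁻¹ := by rw [B]
    _ = S0*(S0*S1*S0⁻¹*S0⁻¹)*S0⁻¹ := by group

/-- σ0- on g1 -/
lemma keyMg1 (B : S0*S1*S0 = S1*S0*S1) :
    S0⁻¹*(S1*S0⁻¹)*S0 = (S1*S0⁻¹)*(S0*S1*S0⁻¹*S0⁻¹)⁻¹ := by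
  symm
  calc (S1*S0⁻¹)*(S0*S1*S0⁻¹*S0⁻¹)⁻¹
      = S0⁻¹*(S0*S1*S0)*S1⁻¹*S0⁻¹ := by group
    _ = S0⁻¹*(S1*S0*S1)*S1⁻¹*S0⁻¹ := by rw [B]
    _ = S0⁻¹*(S1*S0⁻¹)*S0 := by group

/-- σ0- on b_j -/
lemma keyMb (c0j : Commute S0 Rj) (c03 : Commute S0 R3) :
    S0⁻¹*(Rj*R0⁻¹)*S0 = (Rj*R0⁻¹)*(R3*R0⁻¹)⁻¹*(S0⁻¹*(R3*R0⁻¹)*S0) := by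
  symm
  calc (Rj*R0⁻¹)*(R3*R0⁻¹)⁻¹*(S0⁻¹*(R3*R0⁻¹)*S0)
      = Rj*(R3⁻¹*S0⁻¹)*R3*R0⁻¹*S0 := by group
    _ = Rj*(S0⁻¹*R3⁻¹)*R3*R0⁻¹*S0 := by rw [← c03.inv_left.inv_right.eq]
    _ = (Rj*S0⁻¹)*R0⁻¹*S0 := by group
    _ = (S0⁻¹*Rj)*R0⁻¹*S0 := by rw [c0j.inv_left.symm.eq]
    _ = S0⁻¹*(Rj*R0⁻¹)*S0 := by group

/-- σ0- on b_3 -/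
lemma keyS3 (B : S0*S1*S0 = S1*S0*S1) (c13 : Commute S1 R3) :
    S0⁻¹*(R3*R0⁻¹)*S0
      = ((S1*S0⁻¹)*(S0*S1*S0⁻¹*S0⁻¹)⁻¹)*((R3*R0⁻¹)*(S0⁻¹*(R0*S1*R0⁻¹*S0⁻¹)*S0)⁻¹) := by
  symm
  calc ((S1*S0⁻¹)*(S0*S1*S0⁻¹*S0⁻¹)⁻¹)*((R3*R0⁻¹)*(S0⁻¹*(R0*S1*R0⁻¹*S0⁻¹)*S0)⁻¹)
      = S0⁻¹*(S0*S1*S0)*S1⁻¹*S0⁻¹*R3*S1⁻¹*R0⁻¹*S0 := by group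
    _ = S0⁻¹*(S1*S0*S1)*S1⁻¹*S0⁻¹*R3*S1⁻¹*R0⁻¹*S0 := by rw [B]
    _ = S0⁻¹*S1*(R3*S1⁻¹)*R0⁻¹*S0 := by group
    _ = S0⁻¹*S1*(S1⁻¹*R3)*R0⁻¹*S0 := by rw [c13.symm.inv_right.eq]
    _ = S0⁻¹*(R3*R0⁻¹)*S0 := by group

/-- EqI -/
lemma keyI (B : S0*S1*S0 = S1*S0*S1) (cA : R0*S1*S0 = S1*S0*R1) :
    S0⁻¹*(R0*S1*R0⁻¹*S0⁻¹)*S0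
      = ((S1*S0⁻¹)*(S0*S1*S0⁻¹*S0⁻¹)⁻¹)*((S0*(R1*R0⁻¹)*S0⁻¹)*(R0*S0*R0⁻¹*S0⁻¹)⁻¹) := by
  calc S0⁻¹*(R0*S1*R0⁻¹*S0⁻¹)*S0
      = S0⁻¹*(R0*S1*S0)*S0⁻¹*R0⁻¹ := by group
    _ = S0⁻¹*(S1*S0*R1)*S0⁻¹*R0⁻¹ := by rw [cA]
    _ = (S0⁻¹*(S1*S0*S1))*S1⁻¹*R1*S0⁻¹*R0⁻¹ := by group
    _ = (S0⁻¹*(S0*S1*S0))*S1⁻¹*R1*S0⁻¹*R0⁻¹ := by rw [← B]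
    _ = ((S1*S0⁻¹)*(S0*S1*S0⁻¹*S0⁻¹)⁻¹)*((S0*(R1*R0⁻¹)*S0⁻¹)*(R0*S0*R0⁻¹*S0⁻¹)⁻¹) := by
        group

/-- ρ0+ on g1 (pure) -/
lemma phiPg1 : R0*(S1*S0⁻¹)*R0⁻¹ = (R0*S1*R0⁻¹*S0⁻¹)*(R0*S0*R0⁻¹*S0⁻¹)⁻¹ := by group

/-- ρ0+ on g2 (pure) -/
lemma phiPg2 : R0*(S0*S1*S0⁻¹*S0⁻¹)*R0⁻¹
    = (R0*S0*R0⁻¹*S0⁻¹)*(S0*((R0*S1*R0⁻¹*S0⁻¹)*(R0*S0*R0⁻¹*S0⁻¹)⁻¹)*S0⁻¹)*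
        (R0*S0*R0⁻¹*S0⁻¹)⁻¹ := by group

lemma phiPa (c : Commute Sj R0) :
    R0*(Sj*S0⁻¹)*R0⁻¹ = (Sj*S0⁻¹)*(R0*S0*R0⁻¹*S0⁻¹)⁻¹ := by
  symm
  calc (Sj*S0⁻¹)*(R0*S0*R0⁻¹*S0⁻¹)⁻¹ = (Sj*R0)*S0⁻¹*R0⁻¹ := by group
    _ = (R0*Sj)*S0⁻¹*R0⁻¹ := by rw [c.eq]
    _ = R0*(Sj*S0⁻¹)*R0⁻¹ := by group

lemma phiPb (c : Commute R0 Rj) : R0*(Rj*R0⁻¹)*R0⁻¹ = Rj*R0⁻¹ := by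
  calc R0*(Rj*R0⁻¹)*R0⁻¹ = (R0*Rj)*R0⁻¹*R0⁻¹ := by group
    _ = (Rj*R0)*R0⁻¹*R0⁻¹ := by rw [c.eq]
    _ = Rj*R0⁻¹ := by group

lemma phiPc (c : Commute R0 Rj) :
    R0*(S0*Rj*R0⁻¹*S0⁻¹)*R0⁻¹
      = (R0*S0*R0⁻¹*S0⁻¹)*(S0*Rj*R0⁻¹*S0⁻¹)*(R0*S0*R0⁻¹*S0⁻¹)⁻¹ := by
  calc R0*(S0*Rj*R0⁻¹*S0⁻¹)*R0⁻¹ = R0*S0*(Rj*R0⁻¹)*S0⁻¹*R0⁻¹ := by group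
    _ = R0*S0*(R0⁻¹*Rj)*S0⁻¹*R0⁻¹ := by rw [← c.inv_left.eq]
    _ = (R0*S0*R0⁻¹*S0⁻¹)*(S0*Rj*R0⁻¹*S0⁻¹)*(R0*S0*R0⁻¹*S0⁻¹)⁻¹ := by group

lemma phiMv1 (c03r : Commute R0 R3) (c13 : Commute S1 R3) :
    R0⁻¹*S1*R0 = (R3*R0⁻¹)*S1*(R3*R0⁻¹)⁻¹ := by
  symm
  calc (R3*R0⁻¹)*S1*(R3*R0⁻¹)⁻¹ = (R3*R0⁻¹)*S1*R0*R3⁻¹ := by group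
    _ = (R0⁻¹*R3)*S1*R0*R3⁻¹ := by rw [c03r.inv_left.symm.eq]
    _ = R0⁻¹*(R3*S1)*R0*R3⁻¹ := by group
    _ = R0⁻¹*(S1*R3)*R0*R3⁻¹ := by rw [c13.symm.eq]
    _ = R0⁻¹*S1*(R3*R0)*R3⁻¹ := by group
    _ = R0⁻¹*S1*(R0*R3)*R3⁻¹ := by rw [c03r.symm.eq]
    _ = R0⁻¹*S1*R0 := by group

lemma phiMg1 (hv : R0⁻¹*S1*R0 = (R3*R0⁻¹)*S1*(R3*R0⁻¹)⁻¹) :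
    R0⁻¹*(S1*S0⁻¹)*R0
      = (R3*R0⁻¹)*((S1*S0⁻¹)*((S0*R3*R0⁻¹*S0⁻¹)⁻¹*(R0⁻¹*S0*R0*S0⁻¹)⁻¹)) := by
  calc R0⁻¹*(S1*S0⁻¹)*R0 = (R0⁻¹*S1*R0)*(R0⁻¹*S0⁻¹*R0) := by group
    _ = ((R3*R0⁻¹)*S1*(R3*R0⁻¹)⁻¹)*(R0⁻¹*S0⁻¹*R0) := by rw [hv]
    _ = (R3*R0⁻¹)*((S1*S0⁻¹)*((S0*R3*R0⁻¹*S0⁻¹)⁻¹*(R0⁻¹*S0*R0*S0⁻¹)⁻¹)) := by group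

lemma phiMg2 (hv : R0⁻¹*S1*R0 = (R3*R0⁻¹)*S1*(R3*R0⁻¹)⁻¹) :
    R0⁻¹*(S0*S1*S0⁻¹*S0⁻¹)*R0
      = (R0⁻¹*S0*R0*S0⁻¹)*(S0*((R3*R0⁻¹)*((S1*S0⁻¹)*((S0*R3*R0⁻¹*S0⁻¹)⁻¹*
          (R0⁻¹*S0*R0*S0⁻¹)⁻¹)))*S0⁻¹)*(R0⁻¹*S0*R0*S0⁻¹)⁻¹ := by
  calc R0⁻¹*(S0*S1*S0⁻¹*S0⁻¹)*R0
      = (R0⁻¹*S0*R0)*(R0⁻¹*S1*R0)*(R0⁻¹*S0⁻¹*R0)*(R0⁻¹*S0⁻¹*R0) := by group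
    _ = (R0⁻¹*S0*R0)*((R3*R0⁻¹)*S1*(R3*R0⁻¹)⁻¹)*(R0⁻¹*S0⁻¹*R0)*(R0⁻¹*S0⁻¹*R0) := by
        rw [hv]
    _ = (R0⁻¹*S0*R0*S0⁻¹)*(S0*((R3*R0⁻¹)*((S1*S0⁻¹)*((S0*R3*R0⁻¹*S0⁻¹)⁻¹*
          (R0⁻¹*S0*R0*S0⁻¹)⁻¹)))*S0⁻¹)*(R0⁻¹*S0*R0*S0⁻¹)⁻¹ := by group

lemma phiMa (c : Commute Sj R0) :
    R0⁻¹*(Sj*S0⁻¹)*R0 = (Sj*S0⁻¹)*(R0⁻¹*S0*R0*S0⁻¹)⁻¹ := by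
  calc R0⁻¹*(Sj*S0⁻¹)*R0 = (R0⁻¹*Sj)*S0⁻¹*R0 := by group
    _ = (Sj*R0⁻¹)*S0⁻¹*R0 := by rw [c.symm.inv_left.eq]
    _ = (Sj*S0⁻¹)*(R0⁻¹*S0*R0*S0⁻¹)⁻¹ := by group

lemma phiMb (c : Commute R0 Rj) : R0⁻¹*(Rj*R0⁻¹)*R0 = Rj*R0⁻¹ := by
  calc R0⁻¹*(Rj*R0⁻¹)*R0 = (R0⁻¹*Rj)*R0⁻¹*R0 := by group
    _ = (Rj*R0⁻¹)*R0⁻¹*R0 := by rw [c.inv_left.eq]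
    _ = Rj*R0⁻¹ := by group

lemma phiMc (c : Commute R0 Rj) :
    R0⁻¹*(S0*Rj*R0⁻¹*S0⁻¹)*R0
      = (R0⁻¹*S0*R0*S0⁻¹)*(S0*Rj*R0⁻¹*S0⁻¹)*(R0⁻¹*S0*R0*S0⁻¹)⁻¹ := by
  symm
  calc (R0⁻¹*S0*R0*S0⁻¹)*(S0*Rj*R0⁻¹*S0⁻¹)*(R0⁻¹*S0*R0*S0⁻¹)⁻¹
      = R0⁻¹*S0*(R0*Rj)*R0⁻¹*R0⁻¹*S0⁻¹*R0 := by group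
    _ = R0⁻¹*S0*(Rj*R0)*R0⁻¹*R0⁻¹*S0⁻¹*R0 := by rw [c.eq]
    _ = R0⁻¹*(S0*Rj*R0⁻¹*S0⁻¹)*R0 := by group

lemma keyPa (c : Commute S0 Sj) : S0*(Sj*S0⁻¹)*S0⁻¹ = Sj*S0⁻¹ := by
  calc S0*(Sj*S0⁻¹)*S0⁻¹ = (S0*Sj)*S0⁻¹*S0⁻¹ := by group
    _ = (Sj*S0)*S0⁻¹*S0⁻¹ := by rw [c.eq]
    _ = Sj*S0⁻¹ := by group

lemma keyMa (c : Commute S0 Sj) : S0⁻¹*(Sj*S0⁻¹)*S0 = Sj*S0⁻¹ := by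
  calc S0⁻¹*(Sj*S0⁻¹)*S0 = (S0⁻¹*Sj)*S0⁻¹*S0 := by group
    _ = (Sj*S0⁻¹)*S0⁻¹*S0 := by rw [c.inv_left.eq]
    _ = Sj*S0⁻¹ := by group

lemma keyPb : S0*(Rj*R0⁻¹)*S0⁻¹ = S0*Rj*R0⁻¹*S0⁻¹ := by group

lemma keyMc : S0⁻¹*(S0*Rj*R0⁻¹*S0⁻¹)*S0 = Rj*R0⁻¹ := by group

lemma keyMg2 : S0⁻¹*(S0*S1*S0⁻¹*S0⁻¹)*S0 = S1*S0⁻¹ := by group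

end GVBAbs


namespace GenVirtBraid

/-- The free-group generator word for `σ_{i+1}` (0-indexed `i`). -/
def σw (n : ℕ) (i : Fin (n-1)) : FreeGroup (Fin (n-1) ⊕ Fin (n-1)) := FreeGroup.of (Sum.inl i)

/-- The free-group generator word for `ρ_{i+1}` (0-indexed `i`). -/
def ρw (n : ℕ) (i : Fin (n-1)) : FreeGroup (Fin (n-1) ⊕ Fin (n-1)) := FreeGroup.of (Sum.inr i)

/-- Defining relators of the generalized virtual braid group `GVB_n`. -/
def gvbRels (n : ℕ) : Set (FreeGroup (Fin (n-1) ⊕ Fin (n-1))) :=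
  {r | ∃ i j : Fin (n-1), ((i:ℕ)+1 < (j:ℕ) ∨ (j:ℕ)+1 < (i:ℕ)) ∧
      r = σw n i * σw n j * (σw n i)⁻¹ * (σw n j)⁻¹} ∪
  {r | ∃ i j : Fin (n-1), (j:ℕ) = (i:ℕ)+1 ∧
      r = σw n i * σw n j * σw n i * (σw n j * σw n i * σw n j)⁻¹} ∪
  {r | ∃ i j : Fin (n-1), ((i:ℕ)+1 < (j:ℕ) ∨ (j:ℕ)+1 < (i:ℕ)) ∧
      r = ρw n i * ρw n j * (ρw n i)⁻¹ * (ρw n j)⁻¹} ∪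
  {r | ∃ i j : Fin (n-1), (j:ℕ) = (i:ℕ)+1 ∧
      r = ρw n i * ρw n j * ρw n i * (ρw n j * ρw n i * ρw n j)⁻¹} ∪
  {r | ∃ i j : Fin (n-1), (j:ℕ) = (i:ℕ)+1 ∧
      r = ρw n i * σw n j * σw n i * (σw n j * σw n i * ρw n j)⁻¹} ∪
  {r | ∃ i j : Fin (n-1), (j:ℕ) = (i:ℕ)+1 ∧
      r = ρw n j * σw n i * σw n j * (σw n i * σw n j * ρw n i)⁻¹} ∪
  {r | ∃ i j : Fin (n-1), ((i:ℕ)+1 < (j:ℕ) ∨ (j:ℕ)+1 < (i:ℕ)) ∧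
      r = σw n i * ρw n j * (σw n i)⁻¹ * (ρw n j)⁻¹}

/-- The generalized virtual braid group `GVB_n` (Fang's presentation). -/
abbrev GVB (n : ℕ) := PresentedGroup (gvbRels n)

/-- The generator `σ_{i+1}` of `GVB_n` (0-indexed `i`). -/
def σ (n : ℕ) (i : Fin (n-1)) : GVB n := PresentedGroup.of (Sum.inl i)

/-- The generator `ρ_{i+1}` of `GVB_n` (0-indexed `i`). -/
def ρ (n : ℕ) (i : Fin (n-1)) : GVB n := PresentedGroup.of (Sum.inr i)

end GenVirtBraid


namespace GVBAux
open GenVirtBraid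

variable {n : ℕ}

lemma mk_rel {r : FreeGroup (Fin (n-1) ⊕ Fin (n-1))} (h : r ∈ gvbRels n) :
    PresentedGroup.mk (gvbRels n) r = 1 :=
  (QuotientGroup.eq_one_iff r).mpr (Subgroup.subset_normalClosure h)

lemma σ_eq (i : Fin (n-1)) : σ n i = PresentedGroup.mk (gvbRels n) (σw n i) := rfl
lemma ρ_eq (i : Fin (n-1)) : ρ n i = PresentedGroup.mk (gvbRels n) (ρw n i) := rfl

lemma rel_of_mem {a b : FreeGroup (Fin (n-1) ⊕ Fin (n-1))}
    (h : a * b⁻¹ ∈ gvbRels n) :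
    PresentedGroup.mk (gvbRels n) a = PresentedGroup.mk (gvbRels n) b := by
  have := mk_rel h
  rw [map_mul, map_inv, mul_inv_eq_one] at this
  exact this

lemma σσ_far (i j : Fin (n-1)) (hij : (i:ℕ)+1 < (j:ℕ) ∨ (j:ℕ)+1 < (i:ℕ)) :
    σ n i * σ n j = σ n j * σ n i := by
  have h : (σw n i * σw n j) * (σw n j * σw n i)⁻¹ ∈ gvbRels n := by
    refine Or.inl (Or.inl (Or.inl (Or.inl (Or.inl (Or.inl ⟨i, j, hij, ?_⟩)))))
    group
  simpa [map_mul, σ_eq] using rel_of_mem h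

lemma σσ_braid (i j : Fin (n-1)) (hij : (j:ℕ) = (i:ℕ)+1) :
    σ n i * σ n j * σ n i = σ n j * σ n i * σ n j := by
  have h : (σw n i * σw n j * σw n i) * (σw n j * σw n i * σw n j)⁻¹ ∈ gvbRels n :=
    Or.inl (Or.inl (Or.inl (Or.inl (Or.inl (Or.inr ⟨i, j, hij, by group⟩)))))
  simpa [map_mul, σ_eq] using rel_of_mem h

lemma ρρ_far (i j : Fin (n-1)) (hij : (i:ℕ)+1 < (j:ℕ) ∨ (j:ℕ)+1 < (i:ℕ)) :
    ρ n i * ρ n j = ρ n j * ρ n i := by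
  have h : (ρw n i * ρw n j) * (ρw n j * ρw n i)⁻¹ ∈ gvbRels n := by
    refine Or.inl (Or.inl (Or.inl (Or.inl (Or.inr ⟨i, j, hij, ?_⟩))))
    group
  simpa [map_mul, ρ_eq] using rel_of_mem h

lemma ρρ_braid (i j : Fin (n-1)) (hij : (j:ℕ) = (i:ℕ)+1) :
    ρ n i * ρ n j * ρ n i = ρ n j * ρ n i * ρ n j := by
  have h : (ρw n i * ρw n j * ρw n i) * (ρw n j * ρw n i * ρw n j)⁻¹ ∈ gvbRels n :=
    Or.inl (Or.inl (Or.inl (Or.inr ⟨i, j, hij, by group⟩)))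
  simpa [map_mul, ρ_eq] using rel_of_mem h

lemma mix1 (i j : Fin (n-1)) (hij : (j:ℕ) = (i:ℕ)+1) :
    ρ n i * σ n j * σ n i = σ n j * σ n i * ρ n j := by
  have h : (ρw n i * σw n j * σw n i) * (σw n j * σw n i * ρw n j)⁻¹ ∈ gvbRels n :=
    Or.inl (Or.inl (Or.inr ⟨i, j, hij, by group⟩))
  simpa [map_mul, σ_eq, ρ_eq] using rel_of_mem h

lemma mix2 (i j : Fin (n-1)) (hij : (j:ℕ) = (i:ℕ)+1) :
    ρ n j * σ n i * σ n j = σ n i * σ n j * ρ n i := by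
  have h : (ρw n j * σw n i * σw n j) * (σw n i * σw n j * ρw n i)⁻¹ ∈ gvbRels n :=
    Or.inl (Or.inr ⟨i, j, hij, by group⟩)
  simpa [map_mul, σ_eq, ρ_eq] using rel_of_mem h

lemma σρ_far (i j : Fin (n-1)) (hij : (i:ℕ)+1 < (j:ℕ) ∨ (j:ℕ)+1 < (i:ℕ)) :
    σ n i * ρ n j = ρ n j * σ n i := by
  have h : (σw n i * ρw n j) * (ρw n j * σw n i)⁻¹ ∈ gvbRels n := by
    refine Or.inr ⟨i, j, hij, ?_⟩
    group
  simpa [map_mul, σ_eq, ρ_eq] using rel_of_mem h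

section Main
variable (n : ℕ) (hn : n ≥ 5)

def s0 : GVB n := σ n ⟨0, by omega⟩
def s1 : GVB n := σ n ⟨1, by omega⟩
def s2 : GVB n := σ n ⟨2, by omega⟩
def s3 : GVB n := σ n ⟨3, by omega⟩
def r0 : GVB n := ρ n ⟨0, by omega⟩
def r1 : GVB n := ρ n ⟨1, by omega⟩
def r2 : GVB n := ρ n ⟨2, by omega⟩
def r3 : GVB n := ρ n ⟨3, by omega⟩

def Sgen : Set (GVB n) :=
  ({ σ n ⟨1, by omega⟩ * (σ n ⟨0, by omega⟩)⁻¹,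
      σ n ⟨0, by omega⟩ * σ n ⟨1, by omega⟩ * (σ n ⟨0, by omega⟩)⁻¹ *
        (σ n ⟨0, by omega⟩)⁻¹ } : Set (GVB n)) ∪
    {x : GVB n | ∃ j : Fin (n-1), 2 ≤ (j : ℕ) ∧
      (x = σ n j * (σ n ⟨0, by omega⟩)⁻¹ ∨
       x = ρ n j * (ρ n ⟨0, by omega⟩)⁻¹ ∨
       x = σ n ⟨0, by omega⟩ * ρ n j * (ρ n ⟨0, by omega⟩)⁻¹ * (σ n ⟨0, by omega⟩)⁻¹)}

def H : Subgroup (GVB n) := Subgroup.closure (Sgen n hn)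

variable {n hn}

lemma Hmem_of_eq {a b : GVB n} (h : a = b) (hb : b ∈ H n hn) : a ∈ H n hn := h ▸ hb

lemma mem_g1 : s1 n hn * (s0 n hn)⁻¹ ∈ H n hn :=
  Subgroup.subset_closure (Or.inl (Or.inl rfl))

lemma mem_g2 : s0 n hn * s1 n hn * (s0 n hn)⁻¹ * (s0 n hn)⁻¹ ∈ H n hn :=
  Subgroup.subset_closure (Or.inl (Or.inr rfl))

lemma mem_a (j : Fin (n-1)) (hj : 2 ≤ (j:ℕ)) : σ n j * (s0 n hn)⁻¹ ∈ H n hn :=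
  Subgroup.subset_closure (Or.inr ⟨j, hj, Or.inl rfl⟩)

lemma mem_b (j : Fin (n-1)) (hj : 2 ≤ (j:ℕ)) : ρ n j * (r0 n hn)⁻¹ ∈ H n hn :=
  Subgroup.subset_closure (Or.inr ⟨j, hj, Or.inr (Or.inl rfl)⟩)

lemma mem_c (j : Fin (n-1)) (hj : 2 ≤ (j:ℕ)) :
    s0 n hn * ρ n j * (r0 n hn)⁻¹ * (s0 n hn)⁻¹ ∈ H n hn :=
  Subgroup.subset_closure (Or.inr ⟨j, hj, Or.inr (Or.inr rfl)⟩)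

-- commutation instances
lemma comm_s0_rj (j : Fin (n-1)) (hj : 2 ≤ (j:ℕ)) :
    s0 n hn * ρ n j = ρ n j * s0 n hn :=
  σρ_far _ j (Or.inl (by show 0+1 < (j:ℕ); omega))

lemma comm_sj_r0 (j : Fin (n-1)) (hj : 2 ≤ (j:ℕ)) :
    σ n j * r0 n hn = r0 n hn * σ n j :=
  σρ_far j _ (Or.inr (by show (0:ℕ)+1 < (j:ℕ); omega))

lemma comm_r0_rj (j : Fin (n-1)) (hj : 2 ≤ (j:ℕ)) :
    r0 n hn * ρ n j = ρ n j * r0 n hn :=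
  ρρ_far _ j (Or.inl (by show 0+1 < (j:ℕ); omega))

lemma comm_s0_sj (j : Fin (n-1)) (hj : 2 ≤ (j:ℕ)) :
    s0 n hn * σ n j = σ n j * s0 n hn :=
  σσ_far _ j (Or.inl (by show 0+1 < (j:ℕ); omega))

lemma comm_s1_r3 : s1 n hn * r3 n hn = r3 n hn * s1 n hn :=
  σρ_far _ _ (Or.inl (by show 1+1 < 3; omega))


-- concrete commute instances
lemma cm_s0s2 : Commute (s0 n hn) (s2 n hn) := σσ_far _ _ (Or.inl (by show 0+1<2; omega))
lemma cm_s0r2 : Commute (s0 n hn) (r2 n hn) := σρ_far _ _ (Or.inl (by show 0+1<2; omega))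
lemma cm_s0r3 : Commute (s0 n hn) (r3 n hn) := σρ_far _ _ (Or.inl (by show 0+1<3; omega))
lemma cm_s2r0 : Commute (s2 n hn) (r0 n hn) := σρ_far _ _ (Or.inr (by show 0+1<2; omega))
lemma cm_r0r2 : Commute (r0 n hn) (r2 n hn) := ρρ_far _ _ (Or.inl (by show 0+1<2; omega))
lemma cm_r0r3 : Commute (r0 n hn) (r3 n hn) := ρρ_far _ _ (Or.inl (by show 0+1<3; omega))
lemma cm_s1r3 : Commute (s1 n hn) (r3 n hn) := σρ_far _ _ (Or.inl (by show 1+1<3; omega))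

lemma cmj_s0r (j : Fin (n-1)) (hj : 2 ≤ (j:ℕ)) : Commute (s0 n hn) (ρ n j) :=
  σρ_far _ j (Or.inl (by show 0+1 < (j:ℕ); omega))
lemma cmj_sr0 (j : Fin (n-1)) (hj : 2 ≤ (j:ℕ)) : Commute (σ n j) (r0 n hn) :=
  σρ_far j _ (Or.inr (by show (0:ℕ)+1 < (j:ℕ); omega))
lemma cmj_r0r (j : Fin (n-1)) (hj : 2 ≤ (j:ℕ)) : Commute (r0 n hn) (ρ n j) :=
  ρρ_far _ j (Or.inl (by show 0+1 < (j:ℕ); omega))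
lemma cmj_s0s (j : Fin (n-1)) (hj : 2 ≤ (j:ℕ)) : Commute (s0 n hn) (σ n j) :=
  σσ_far _ j (Or.inl (by show 0+1 < (j:ℕ); omega))

lemma braid01 : s0 n hn * s1 n hn * s0 n hn = s1 n hn * s0 n hn * s1 n hn :=
  σσ_braid (n := n) ⟨0, by omega⟩ ⟨1, by omega⟩ rfl

/-- r5 at (0,1) :  ρ0 σ1 σ0 = σ1 σ0 ρ1 -/
lemma mixA : r0 n hn * s1 n hn * s0 n hn = s1 n hn * s0 n hn * r1 n hn :=
  mix1 (n := n) ⟨0, by omega⟩ ⟨1, by omega⟩ rfl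

/-- r6 at (0,1) : ρ1 σ0 σ1 = σ0 σ1 ρ0 -/
lemma mixB : r1 n hn * s0 n hn * s1 n hn = s0 n hn * s1 n hn * r0 n hn :=
  mix2 (n := n) ⟨0, by omega⟩ ⟨1, by omega⟩ rfl

/-- r5 at (1,2) : ρ1 σ2 σ1 = σ2 σ1 ρ2 -/
lemma mixC : r1 n hn * s2 n hn * s1 n hn = s2 n hn * s1 n hn * r2 n hn :=
  mix1 (n := n) ⟨1, by omega⟩ ⟨2, by omega⟩ rfl

/-- r6 at (1,2) : ρ2 σ1 σ2 = σ1 σ2 ρ1 -/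
lemma mixD : r2 n hn * s1 n hn * s2 n hn = s1 n hn * s2 n hn * r1 n hn :=
  mix2 (n := n) ⟨1, by omega⟩ ⟨2, by omega⟩ rfl

lemma mem_of_mul_eq_one {a w : GVB n} (h : a * w = 1) (hw : w ∈ H n hn) : a ∈ H n hn := by
  have : a = w⁻¹ := eq_inv_of_mul_eq_one_left h
  exact this ▸ inv_mem hw

/-- `u = ρ0 σ1 ρ0⁻¹ σ0⁻¹ ∈ H` -/
lemma mem_u : r0 n hn * s1 n hn * (r0 n hn)⁻¹ * (s0 n hn)⁻¹ ∈ H n hn := by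
  refine mem_of_mul_eq_one (w :=
      (s0 n hn * r3 n hn * (r0 n hn)⁻¹ * (s0 n hn)⁻¹)⁻¹ * (s1 n hn * (s0 n hn)⁻¹)⁻¹ *
        (r3 n hn * (r0 n hn)⁻¹)) ?_ ?_
  · calc r0 n hn * s1 n hn * (r0 n hn)⁻¹ * (s0 n hn)⁻¹ *
        ((s0 n hn * r3 n hn * (r0 n hn)⁻¹ * (s0 n hn)⁻¹)⁻¹ * (s1 n hn * (s0 n hn)⁻¹)⁻¹ *
          (r3 n hn * (r0 n hn)⁻¹))
        = r0 n hn * s1 n hn * ((r0 n hn)⁻¹ * r0 n hn) * (r3 n hn)⁻¹ * (s1 n hn)⁻¹ *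
            (r3 n hn * (r0 n hn)⁻¹) := by group
      _ = r0 n hn * (s1 n hn * (r3 n hn)⁻¹) * (s1 n hn)⁻¹ * (r3 n hn * (r0 n hn)⁻¹) := by group
      _ = r0 n hn * ((r3 n hn)⁻¹ * s1 n hn) * (s1 n hn)⁻¹ * (r3 n hn * (r0 n hn)⁻¹) := by
          rw [cm_s1r3.inv_right.eq]
      _ = 1 := by group
  · exact mul_mem (mul_mem (inv_mem (mem_c _ (by norm_num))) (inv_mem mem_g1))
      (mem_b _ (by norm_num))

/-- `A' = ρ0 σ0 ρ0⁻¹ σ0⁻¹ ∈ H` -/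
lemma mem_A : r0 n hn * s0 n hn * (r0 n hn)⁻¹ * (s0 n hn)⁻¹ ∈ H n hn := by
  refine mem_of_mul_eq_one (w :=
      (s0 n hn * r2 n hn * (r0 n hn)⁻¹ * (s0 n hn)⁻¹)⁻¹ * (r2 n hn * (r0 n hn)⁻¹)) ?_ ?_
  · calc r0 n hn * s0 n hn * (r0 n hn)⁻¹ * (s0 n hn)⁻¹ *
        ((s0 n hn * r2 n hn * (r0 n hn)⁻¹ * (s0 n hn)⁻¹)⁻¹ * (r2 n hn * (r0 n hn)⁻¹))
        = r0 n hn * (s0 n hn * (r0 n hn)⁻¹ * r0 n hn * (r2 n hn)⁻¹ * (s0 n hn)⁻¹) *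
            (s0 n hn * (s0 n hn)⁻¹) * r2 n hn * (r0 n hn)⁻¹ := by group
      _ = r0 n hn * (s0 n hn * (r2 n hn)⁻¹) * (s0 n hn)⁻¹ * r2 n hn * (r0 n hn)⁻¹ := by group
      _ = r0 n hn * ((r2 n hn)⁻¹ * s0 n hn) * (s0 n hn)⁻¹ * r2 n hn * (r0 n hn)⁻¹ := by
          rw [cm_s0r2.inv_right.eq]
      _ = 1 := by group
  · exact mul_mem (inv_mem (mem_c _ (by norm_num))) (mem_b _ (by norm_num))

/-- `y = ρ0⁻¹ σ0 ρ0 σ0⁻¹ ∈ H` -/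
lemma mem_y : (r0 n hn)⁻¹ * s0 n hn * r0 n hn * (s0 n hn)⁻¹ ∈ H n hn := by
  refine mem_of_mul_eq_one (w :=
      (s0 n hn * r2 n hn * (r0 n hn)⁻¹ * (s0 n hn)⁻¹) * (r2 n hn * (r0 n hn)⁻¹)⁻¹) ?_ ?_
  · calc (r0 n hn)⁻¹ * s0 n hn * r0 n hn * (s0 n hn)⁻¹ *
        ((s0 n hn * r2 n hn * (r0 n hn)⁻¹ * (s0 n hn)⁻¹) * (r2 n hn * (r0 n hn)⁻¹)⁻¹)
        = (r0 n hn)⁻¹ * s0 n hn * (r0 n hn * r2 n hn) * (r0 n hn)⁻¹ * (s0 n hn)⁻¹ *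
            (r0 n hn * (r2 n hn)⁻¹) := by group
      _ = (r0 n hn)⁻¹ * s0 n hn * (r2 n hn * r0 n hn) * (r0 n hn)⁻¹ * (s0 n hn)⁻¹ *
            (r0 n hn * (r2 n hn)⁻¹) := by rw [cm_r0r2.eq]
      _ = (r0 n hn)⁻¹ * (s0 n hn * r2 n hn) * (s0 n hn)⁻¹ * (r0 n hn * (r2 n hn)⁻¹) := by
          group
      _ = (r0 n hn)⁻¹ * (r2 n hn * s0 n hn) * (s0 n hn)⁻¹ * (r0 n hn * (r2 n hn)⁻¹) := by
          rw [cm_s0r2.eq]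
      _ = ((r0 n hn)⁻¹ * r2 n hn) * (r0 n hn * (r2 n hn)⁻¹) := by group
      _ = (r2 n hn * (r0 n hn)⁻¹) * (r0 n hn * (r2 n hn)⁻¹) := by rw [cm_r0r2.inv_left.eq]
      _ = 1 := by group
  · exact mul_mem (mem_c _ (by norm_num)) (inv_mem (mem_b _ (by norm_num)))

open GVBAbs
open scoped commutatorElement

lemma mem_a2 : s2 n hn * (s0 n hn)⁻¹ ∈ H n hn := mem_a ⟨2, by omega⟩ (by norm_num)
lemma mem_b2 : r2 n hn * (r0 n hn)⁻¹ ∈ H n hn := mem_b ⟨2, by omega⟩ (by norm_num)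
lemma mem_b3 : r3 n hn * (r0 n hn)⁻¹ ∈ H n hn := mem_b ⟨3, by omega⟩ (by norm_num)
lemma mem_c2 : s0 n hn * r2 n hn * (r0 n hn)⁻¹ * (s0 n hn)⁻¹ ∈ H n hn :=
  mem_c ⟨2, by omega⟩ (by norm_num)
lemma mem_c3 : s0 n hn * r3 n hn * (r0 n hn)⁻¹ * (s0 n hn)⁻¹ ∈ H n hn :=
  mem_c ⟨3, by omega⟩ (by norm_num)

/-- `σ0² (ρ1 ρ0⁻¹) σ0⁻² ∈ H` -/
lemma mem_X2 : s0 n hn * s0 n hn * (r1 n hn * (r0 n hn)⁻¹) * (s0 n hn)⁻¹ * (s0 n hn)⁻¹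
    ∈ H n hn :=
  Hmem_of_eq (keyG _ _ _ _ _ _ mixD cm_s0s2 cm_s2r0).symm
    (mul_mem (mul_mem (inv_mem mem_a2) (inv_mem mem_g1))
      (mul_mem mem_b2 (mul_mem mem_u mem_a2)))

/-- `T2 = σ0 c2 σ0⁻¹ ∈ H` -/
lemma mem_T2 : s0 n hn * (s0 n hn * r2 n hn * (r0 n hn)⁻¹ * (s0 n hn)⁻¹) * (s0 n hn)⁻¹
    ∈ H n hn :=
  Hmem_of_eq (keyH _ _ _ _ _ mixA cm_s0r2)
    (mul_mem (mul_mem mem_c2 (inv_mem mem_u)) (mul_mem mem_g1 mem_X2))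

/-- `T_j = σ0 c_j σ0⁻¹ ∈ H` -/
lemma mem_Tj (j : Fin (n-1)) (hj : 2 ≤ (j:ℕ)) :
    s0 n hn * (s0 n hn * ρ n j * (r0 n hn)⁻¹ * (s0 n hn)⁻¹) * (s0 n hn)⁻¹ ∈ H n hn :=
  Hmem_of_eq (keyT _ _ _ _ (cmj_s0r j hj) cm_s0r2)
    (mul_mem (mul_mem (mem_b j hj) (inv_mem mem_b2)) mem_T2)

/-- `σ0 u σ0⁻¹ ∈ H` -/
lemma mem_U1 : s0 n hn * (r0 n hn * s1 n hn * (r0 n hn)⁻¹ * (s0 n hn)⁻¹) * (s0 n hn)⁻¹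
    ∈ H n hn :=
  Hmem_of_eq (keyU _ _ _ _ cm_s1r3)
    (mul_mem (inv_mem mem_c3) (mul_mem mem_g2 (mem_Tj ⟨3, by omega⟩ (by norm_num))))

/-- THE key membership : `X = ρ1 ρ0⁻¹ ∈ H` -/
lemma mem_X : r1 n hn * (r0 n hn)⁻¹ ∈ H n hn :=
  Hmem_of_eq (keyF _ _ _ _ _ _ mixC cm_s2r0)
    (mul_mem mem_a2 (mul_mem mem_g2 (mul_mem mem_T2
      (mul_mem (inv_mem mem_U1) (inv_mem mem_a2)))))

/-- positive σ0-conjugation stability -/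
lemma conj_s0 {x : GVB n} (hx : x ∈ H n hn) :
    s0 n hn * x * (s0 n hn)⁻¹ ∈ H n hn := by
  induction hx using Subgroup.closure_induction with
  | mem x hx =>
    rcases hx with (rfl | rfl) | ⟨j, hj, (rfl | rfl | rfl)⟩
    · exact Hmem_of_eq rfl mem_g2
    · exact Hmem_of_eq (keyPg2 _ _ braid01) (mul_mem (inv_mem mem_g1) mem_g2)
    · exact Hmem_of_eq (keyPa _ _ (cmj_s0s j hj)) (mem_a j hj)
    · exact Hmem_of_eq (keyPb _ _ _) (mem_c j hj)
    · exact Hmem_of_eq (keyT _ _ _ _ (cmj_s0r j hj) cm_s0r2)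
        (mul_mem (mul_mem (mem_b j hj) (inv_mem mem_b2)) mem_T2)
  | one => exact Hmem_of_eq (by group) (one_mem _)
  | mul x y hx hy ihx ihy => exact Hmem_of_eq (by group) (mul_mem ihx ihy)
  | inv x hx ih => exact Hmem_of_eq (by group) (inv_mem ih)

/-- `σ0⁻¹ u σ0 ∈ H` -/
lemma mem_Um1 : (s0 n hn)⁻¹ * (r0 n hn * s1 n hn * (r0 n hn)⁻¹ * (s0 n hn)⁻¹) * s0 n hn
    ∈ H n hn :=
  Hmem_of_eq (keyI _ _ _ _ braid01 mixA)
    (mul_mem (mul_mem mem_g1 (inv_mem mem_g2)) (mul_mem (conj_s0 mem_X) (inv_mem mem_A)))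

/-- `σ0⁻¹ b3 σ0 ∈ H` -/
lemma mem_s3 : (s0 n hn)⁻¹ * (r3 n hn * (r0 n hn)⁻¹) * s0 n hn ∈ H n hn :=
  Hmem_of_eq (keyS3 _ _ _ _ braid01 cm_s1r3)
    (mul_mem (mul_mem mem_g1 (inv_mem mem_g2)) (mul_mem mem_b3 (inv_mem mem_Um1)))

/-- negative σ0-conjugation stability -/
lemma conj_s0_inv {x : GVB n} (hx : x ∈ H n hn) :
    (s0 n hn)⁻¹ * x * s0 n hn ∈ H n hn := by
  induction hx using Subgroup.closure_induction with
  | mem x hx =>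
    rcases hx with (rfl | rfl) | ⟨j, hj, (rfl | rfl | rfl)⟩
    · exact Hmem_of_eq (keyMg1 _ _ braid01) (mul_mem mem_g1 (inv_mem mem_g2))
    · exact Hmem_of_eq (keyMg2 _ _) mem_g1
    · exact Hmem_of_eq (keyMa _ _ (cmj_s0s j hj)) (mem_a j hj)
    · exact Hmem_of_eq (keyMb _ _ _ _ (cmj_s0r j hj) cm_s0r3)
        (mul_mem (mul_mem (mem_b j hj) (inv_mem mem_b3)) mem_s3)
    · exact Hmem_of_eq (keyMc _ _ _) (mem_b j hj)
  | one => exact Hmem_of_eq (by group) (one_mem _)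
  | mul x y hx hy ihx ihy => exact Hmem_of_eq (by group) (mul_mem ihx ihy)
  | inv x hx ih => exact Hmem_of_eq (by group) (inv_mem ih)

/-- positive ρ0-conjugation stability -/
lemma conj_r0 {x : GVB n} (hx : x ∈ H n hn) :
    r0 n hn * x * (r0 n hn)⁻¹ ∈ H n hn := by
  induction hx using Subgroup.closure_induction with
  | mem x hx =>
    rcases hx with (rfl | rfl) | ⟨j, hj, (rfl | rfl | rfl)⟩
    · exact Hmem_of_eq (phiPg1 _ _ _) (mul_mem mem_u (inv_mem mem_A))
    · exact Hmem_of_eq (phiPg2 _ _ _)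
        (mul_mem (mul_mem mem_A (conj_s0 (mul_mem mem_u (inv_mem mem_A)))) (inv_mem mem_A))
    · exact Hmem_of_eq (phiPa _ _ _ (cmj_sr0 j hj)) (mul_mem (mem_a j hj) (inv_mem mem_A))
    · exact Hmem_of_eq (phiPb _ _ (cmj_r0r j hj)) (mem_b j hj)
    · exact Hmem_of_eq (phiPc _ _ _ (cmj_r0r j hj))
        (mul_mem (mul_mem mem_A (mem_c j hj)) (inv_mem mem_A))
  | one => exact Hmem_of_eq (by group) (one_mem _)
  | mul x y hx hy ihx ihy => exact Hmem_of_eq (by group) (mul_mem ihx ihy)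
  | inv x hx ih => exact Hmem_of_eq (by group) (inv_mem ih)

/-- negative ρ0-conjugation stability -/
lemma conj_r0_inv {x : GVB n} (hx : x ∈ H n hn) :
    (r0 n hn)⁻¹ * x * r0 n hn ∈ H n hn := by
  have hv := phiMv1 (s1 n hn) (r0 n hn) (r3 n hn) cm_r0r3 cm_s1r3
  induction hx using Subgroup.closure_induction with
  | mem x hx =>
    rcases hx with (rfl | rfl) | ⟨j, hj, (rfl | rfl | rfl)⟩
    · exact Hmem_of_eq (phiMg1 _ _ _ _ hv)
        (mul_mem mem_b3 (mul_mem mem_g1 (mul_mem (inv_mem mem_c3) (inv_mem mem_y))))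
    · exact Hmem_of_eq (phiMg2 _ _ _ _ hv)
        (mul_mem (mul_mem mem_y (conj_s0 (mul_mem mem_b3 (mul_mem mem_g1
          (mul_mem (inv_mem mem_c3) (inv_mem mem_y)))))) (inv_mem mem_y))
    · exact Hmem_of_eq (phiMa _ _ _ (cmj_sr0 j hj)) (mul_mem (mem_a j hj) (inv_mem mem_y))
    · exact Hmem_of_eq (phiMb _ _ (cmj_r0r j hj)) (mem_b j hj)
    · exact Hmem_of_eq (phiMc _ _ _ (cmj_r0r j hj))
        (mul_mem (mul_mem mem_y (mem_c j hj)) (inv_mem mem_y))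
  | one => exact Hmem_of_eq (by group) (one_mem _)
  | mul x y hx hy ihx ihy => exact Hmem_of_eq (by group) (mul_mem ihx ihy)
  | inv x hx ih => exact Hmem_of_eq (by group) (inv_mem ih)

lemma s0_norm : s0 n hn ∈ Subgroup.normalizer (H n hn : Set (GVB n)) := by
  rw [Subgroup.mem_normalizer_iff]
  intro h
  constructor
  · exact fun hh => conj_s0 hh
  · intro hh
    exact Hmem_of_eq
      (show h = (s0 n hn)⁻¹ * (s0 n hn * h * (s0 n hn)⁻¹) * s0 n hn by group)
      (conj_s0_inv hh)

lemma r0_norm : r0 n hn ∈ Subgroup.normalizer (H n hn : Set (GVB n)) := by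
  rw [Subgroup.mem_normalizer_iff]
  intro h
  constructor
  · exact fun hh => conj_r0 hh
  · intro hh
    exact Hmem_of_eq
      (show h = (r0 n hn)⁻¹ * (r0 n hn * h * (r0 n hn)⁻¹) * r0 n hn by group)
      (conj_r0_inv hh)

lemma mem_d_all (i : Fin (n-1)) : σ n i * (s0 n hn)⁻¹ ∈ H n hn := by
  rcases Nat.lt_or_ge (i : ℕ) 2 with h2 | h2
  · have h01 : (i:ℕ) = 0 ∨ (i:ℕ) = 1 := by omega
    rcases h01 with h0 | h1
    · have : i = ⟨0, by omega⟩ := Fin.ext h0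
      rw [this]
      exact Hmem_of_eq (mul_inv_cancel _) (one_mem _)
    · have : i = ⟨1, by omega⟩ := Fin.ext h1
      rw [this]
      exact mem_g1
  · exact mem_a i h2

lemma mem_e_all (i : Fin (n-1)) : ρ n i * (r0 n hn)⁻¹ ∈ H n hn := by
  rcases Nat.lt_or_ge (i : ℕ) 2 with h2 | h2
  · have h01 : (i:ℕ) = 0 ∨ (i:ℕ) = 1 := by omega
    rcases h01 with h0 | h1
    · have : i = ⟨0, by omega⟩ := Fin.ext h0
      rw [this]
      exact Hmem_of_eq (mul_inv_cancel _) (one_mem _)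
    · have : i = ⟨1, by omega⟩ := Fin.ext h1
      rw [this]
      exact mem_X
  · exact mem_b i h2

lemma H_normal : (H n hn).Normal := by
  rw [← Subgroup.normalizer_eq_top_iff, eq_top_iff, ← PresentedGroup.closure_range_of (gvbRels n),
    Subgroup.closure_le]
  rintro x ⟨v, rfl⟩
  cases v with
  | inl i =>
    show σ n i ∈ Subgroup.normalizer (H n hn : Set (GVB n))
    have e : σ n i = (σ n i * (s0 n hn)⁻¹) * s0 n hn := by group
    rw [e]
    exact mul_mem (Subgroup.le_normalizer (mem_d_all i)) s0_norm
  | inr i =>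
    show ρ n i ∈ Subgroup.normalizer (H n hn : Set (GVB n))
    have e : ρ n i = (ρ n i * (r0 n hn)⁻¹) * r0 n hn := by group
    rw [e]
    exact mul_mem (Subgroup.le_normalizer (mem_e_all i)) r0_norm

lemma commutator_le_H : commutator (GVB n) ≤ H n hn := by
  haveI hN : (H n hn).Normal := H_normal
  rw [commutator_def, Subgroup.commutator_le]
  intro x _ y _
  have hcom : Commute ((QuotientGroup.mk (s0 n hn) : GVB n ⧸ H n hn))
      (QuotientGroup.mk (r0 n hn)) := by
    have hmem : (s0 n hn * r0 n hn)⁻¹ * (r0 n hn * s0 n hn) ∈ H n hn :=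
      Hmem_of_eq
        (show (s0 n hn * r0 n hn)⁻¹ * (r0 n hn * s0 n hn)
            = (s0 n hn)⁻¹ * ((r0 n hn)⁻¹ * s0 n hn * r0 n hn * (s0 n hn)⁻¹)⁻¹ * s0 n hn
          by group)
        (conj_s0_inv (inv_mem mem_y))
    have h1 : (QuotientGroup.mk (s0 n hn * r0 n hn) : GVB n ⧸ H n hn)
        = QuotientGroup.mk (r0 n hn * s0 n hn) := QuotientGroup.eq.mpr hmem
    simpa [QuotientGroup.mk_mul, Commute, SemiconjBy] using h1
  have key : ∀ g : GVB n, ∃ p q : ℤ, (QuotientGroup.mk g : GVB n ⧸ H n hn)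
      = (QuotientGroup.mk (s0 n hn))^p * (QuotientGroup.mk (r0 n hn))^q := by
    intro g
    have hg : g ∈ Subgroup.closure (Set.range (PresentedGroup.of : _ → GVB n)) := by
      rw [PresentedGroup.closure_range_of]; exact Subgroup.mem_top g
    induction hg using Subgroup.closure_induction with
    | mem x hx =>
      obtain ⟨v, rfl⟩ := hx
      cases v with
      | inl i =>
        refine ⟨1, 0, ?_⟩
        have e0 : PresentedGroup.of (rels := gvbRels n) (Sum.inl i) = σ n i := rfl
        rw [e0, show σ n i = (σ n i * (s0 n hn)⁻¹) * s0 n hn by group,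
          QuotientGroup.mk_mul, (QuotientGroup.eq_one_iff _).mpr (mem_d_all i)]
        group
      | inr i =>
        refine ⟨0, 1, ?_⟩
        have e0 : PresentedGroup.of (rels := gvbRels n) (Sum.inr i) = ρ n i := rfl
        rw [e0, show ρ n i = (ρ n i * (r0 n hn)⁻¹) * r0 n hn by group,
          QuotientGroup.mk_mul, (QuotientGroup.eq_one_iff _).mpr (mem_e_all i)]
        group
    | one => exact ⟨0, 0, by rw [QuotientGroup.mk_one]; group⟩
    | mul a b ha hb iha ihb =>
      obtain ⟨p, q, e1⟩ := iha
      obtain ⟨p', q', e2⟩ := ihb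
      refine ⟨p + p', q + q', ?_⟩
      have h2 : (QuotientGroup.mk (r0 n hn) : GVB n ⧸ H n hn)^q
          * (QuotientGroup.mk (s0 n hn))^p'
          = (QuotientGroup.mk (s0 n hn))^p' * (QuotientGroup.mk (r0 n hn))^q :=
        ((hcom.zpow_zpow p' q).symm).eq
      calc (QuotientGroup.mk (a*b) : GVB n ⧸ H n hn)
          = QuotientGroup.mk a * QuotientGroup.mk b := by rw [QuotientGroup.mk_mul]
        _ = ((QuotientGroup.mk (s0 n hn))^p * (QuotientGroup.mk (r0 n hn))^q)
            * ((QuotientGroup.mk (s0 n hn))^p' * (QuotientGroup.mk (r0 n hn))^q') := by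
            rw [e1, e2]
        _ = (QuotientGroup.mk (s0 n hn))^p
            * ((QuotientGroup.mk (r0 n hn))^q * (QuotientGroup.mk (s0 n hn))^p')
            * (QuotientGroup.mk (r0 n hn))^q' := by group
        _ = (QuotientGroup.mk (s0 n hn))^p
            * ((QuotientGroup.mk (s0 n hn))^p' * (QuotientGroup.mk (r0 n hn))^q)
            * (QuotientGroup.mk (r0 n hn))^q' := by rw [h2]
        _ = (QuotientGroup.mk (s0 n hn))^(p+p') * (QuotientGroup.mk (r0 n hn))^(q+q') := by
            group
    | inv a ha iha =>
      obtain ⟨p, q, e1⟩ := iha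
      refine ⟨-p, -q, ?_⟩
      have h2 : (QuotientGroup.mk (r0 n hn) : GVB n ⧸ H n hn)^(-q)
          * (QuotientGroup.mk (s0 n hn))^(-p)
          = (QuotientGroup.mk (s0 n hn))^(-p) * (QuotientGroup.mk (r0 n hn))^(-q) :=
        ((hcom.zpow_zpow (-p) (-q)).symm).eq
      calc (QuotientGroup.mk a⁻¹ : GVB n ⧸ H n hn) = (QuotientGroup.mk a)⁻¹ := by
            rw [QuotientGroup.mk_inv]
        _ = ((QuotientGroup.mk (s0 n hn))^p * (QuotientGroup.mk (r0 n hn))^q)⁻¹ := by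
            rw [e1]
        _ = (QuotientGroup.mk (r0 n hn))^(-q) * (QuotientGroup.mk (s0 n hn))^(-p) := by
            group
        _ = (QuotientGroup.mk (s0 n hn))^(-p) * (QuotientGroup.mk (r0 n hn))^(-q) := h2
  obtain ⟨p, q, e1⟩ := key x
  obtain ⟨p', q', e2⟩ := key y
  have hcxy : Commute (QuotientGroup.mk x : GVB n ⧸ H n hn) (QuotientGroup.mk y) := by
    rw [e1, e2]
    refine Commute.mul_left ?_ ?_
    · exact Commute.mul_right ((Commute.refl _).zpow_zpow p p') (hcom.zpow_zpow p q')
    · exact Commute.mul_right ((hcom.symm.zpow_zpow q p')) ((Commute.refl _).zpow_zpow q q')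
  have hone : (QuotientGroup.mk ⁅x, y⁆ : GVB n ⧸ H n hn) = 1 := by
    have := map_commutatorElement (QuotientGroup.mk' (H n hn)) x y
    rw [show (QuotientGroup.mk ⁅x,y⁆ : GVB n ⧸ H n hn) = QuotientGroup.mk' (H n hn) ⁅x,y⁆
      from rfl, this]
    exact commutatorElement_eq_one_iff_commute.mpr hcxy
  exact (QuotientGroup.eq_one_iff _).mp hone

lemma braid_comm_mem {a b : GVB n} (h : a*b*a = b*a*b) :
    b * a⁻¹ ∈ commutator (GVB n) := by
  have e : b * a⁻¹ = ⁅a⁻¹, b⁻¹⁆ := by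
    symm
    calc ⁅a⁻¹, b⁻¹⁆ = a⁻¹ * b⁻¹ * (a*b*a) * a⁻¹ := by
          rw [commutatorElement_def]; group
      _ = a⁻¹ * b⁻¹ * (b*a*b) * a⁻¹ := by rw [h]
      _ = b * a⁻¹ := by group
  rw [e]
  exact Subgroup.commutator_mem_commutator (Subgroup.mem_top _) (Subgroup.mem_top _)

lemma tele_s : ∀ (k : ℕ) (hk : k < n-1),
    σ n ⟨k, hk⟩ * (s0 n hn)⁻¹ ∈ commutator (GVB n) := by
  intro k
  induction k with
  | zero =>
    intro hk
    have e : σ n ⟨0, hk⟩ * (s0 n hn)⁻¹ = 1 := mul_inv_cancel _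
    rw [e]; exact one_mem _
  | succ k ih =>
    intro hk
    have hk' : k < n-1 := by omega
    have hb := σσ_braid (n := n) ⟨k, hk'⟩ ⟨k+1, hk⟩ rfl
    have h1 := braid_comm_mem hb
    have e : σ n ⟨k+1, hk⟩ * (s0 n hn)⁻¹
        = (σ n ⟨k+1, hk⟩ * (σ n ⟨k, hk'⟩)⁻¹) * (σ n ⟨k, hk'⟩ * (s0 n hn)⁻¹) := by group
    rw [e]
    exact mul_mem h1 (ih hk')

lemma tele_r : ∀ (k : ℕ) (hk : k < n-1),
    ρ n ⟨k, hk⟩ * (r0 n hn)⁻¹ ∈ commutator (GVB n) := by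
  intro k
  induction k with
  | zero =>
    intro hk
    have e : ρ n ⟨0, hk⟩ * (r0 n hn)⁻¹ = 1 := mul_inv_cancel _
    rw [e]; exact one_mem _
  | succ k ih =>
    intro hk
    have hk' : k < n-1 := by omega
    have hb := ρρ_braid (n := n) ⟨k, hk'⟩ ⟨k+1, hk⟩ rfl
    have h1 := braid_comm_mem hb
    have e : ρ n ⟨k+1, hk⟩ * (r0 n hn)⁻¹
        = (ρ n ⟨k+1, hk⟩ * (ρ n ⟨k, hk'⟩)⁻¹) * (ρ n ⟨k, hk'⟩ * (r0 n hn)⁻¹) := by group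
    rw [e]
    exact mul_mem h1 (ih hk')

lemma tele_r' (j : Fin (n-1)) : ρ n j * (r0 n hn)⁻¹ ∈ commutator (GVB n) :=
  tele_r j.1 j.2

lemma Sgen_sub : Sgen n hn ⊆ (commutator (GVB n) : Set (GVB n)) := by
  intro x hx
  haveI : Subgroup.Normal (commutator (GVB n)) := by
    rw [commutator_def]; infer_instance
  rcases hx with (rfl | rfl) | ⟨j, hj, (rfl | rfl | rfl)⟩
  · exact tele_s (hn := hn) 1 (by omega)
  · show s0 n hn * s1 n hn * (s0 n hn)⁻¹ * (s0 n hn)⁻¹ ∈ commutator (GVB n)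
    have e : s0 n hn * s1 n hn * (s0 n hn)⁻¹ * (s0 n hn)⁻¹
        = s0 n hn * (s1 n hn * (s0 n hn)⁻¹) * (s0 n hn)⁻¹ := by group
    rw [e]
    exact this.conj_mem _ (tele_s (hn := hn) 1 (by omega)) (s0 n hn)
  · exact tele_s (hn := hn) j.1 j.2
  · exact tele_r (hn := hn) j.1 j.2
  · show s0 n hn * ρ n j * (r0 n hn)⁻¹ * (s0 n hn)⁻¹ ∈ commutator (GVB n)
    have e : s0 n hn * ρ n j * (r0 n hn)⁻¹ * (s0 n hn)⁻¹
        = s0 n hn * (ρ n j * (r0 n hn)⁻¹) * (s0 n hn)⁻¹ := by group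
    rw [e]
    exact this.conj_mem _ (tele_r' j) (s0 n hn)

lemma main_eq : H n hn = commutator (GVB n) :=
  le_antisymm ((Subgroup.closure_le _).mpr Sgen_sub) commutator_le_H

end Main
end GVBAux

open GenVirtBraid in
/-- For `n ≥ 5`, the commutator subgroup of `GVB_n` is generated by the `3n - 7` elements
`α_{0,0,2} = σ₂σ₁⁻¹`, `α_{1,0,2} = σ₁σ₂σ₁⁻²`, and, for `3 ≤ j ≤ n-1` (so `2 ≤ (j:ℕ)` in the
0-indexed convention), `α_j = σ_jσ₁⁻¹`, `β_{0,j} = ρ_jρ₁⁻¹`, `β_{1,j} = σ₁ρ_jρ₁⁻¹σ₁⁻¹`. -/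
theorem gvb_commutator_eq_closure_explicit (n : ℕ) (hn : 5 ≤ n) :
    Subgroup.closure
      (({ σ n ⟨1, by omega⟩ * (σ n ⟨0, by omega⟩)⁻¹,
          σ n ⟨0, by omega⟩ * σ n ⟨1, by omega⟩ * (σ n ⟨0, by omega⟩)⁻¹ *
            (σ n ⟨0, by omega⟩)⁻¹ } : Set (GVB n)) ∪
        {x : GVB n | ∃ j : Fin (n-1), 2 ≤ (j : ℕ) ∧
          (x = σ n j * (σ n ⟨0, by omega⟩)⁻¹ ∨
           x = ρ n j * (ρ n ⟨0, by omega⟩)⁻¹ ∨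
           x = σ n ⟨0, by omega⟩ * ρ n j * (ρ n ⟨0, by omega⟩)⁻¹ * (σ n ⟨0, by omega⟩)⁻¹)})
      = commutator (GVB n) :=
  GVBAux.main_eq (n := n) (hn := hn)
end

section
/- The commutator subgroups GVB_3' = [GVB_3, GVB_3] and GVB_4' = [GVB_4, GVB_4] of the generalized virtual braid groups GVB_3 and GVB_4 are not perfect groups; that is, [GVB_3', GVB_3'] ≠ GVB_3' and [GVB_4', GVB_4'] ≠ GVB_4'. -/
section GVBAux

open GenVirtBraid Subgroup
open scoped commutatorElement

private lemma gvb_sign_one_comm : ∀ x y : Equiv.Perm (Fin 3),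
    Equiv.Perm.sign x = 1 → Equiv.Perm.sign y = 1 → x * y = y * x := by decide

private lemma gvb_swap_comm_ne :
    ⁅Equiv.swap (0:Fin 3) 1, Equiv.swap (1:Fin 3) 2⁆ ≠ 1 := by decide

/-- If a group maps to `S₃` hitting both adjacent transpositions, its commutator
subgroup is not perfect. -/
private lemma gvb_not_perfect_aux {G : Type*} [Group G] (F : G →* Equiv.Perm (Fin 3))
    (a b : G) (ha : F a = Equiv.swap 0 1) (hb : F b = Equiv.swap 1 2) :
    ⁅commutator G, commutator G⁆ ≠ commutator G := by
  intro hG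
  set K : Subgroup (Equiv.Perm (Fin 3)) := ⁅F.range, F.range⁆ with hK
  have h1 : Subgroup.map F (commutator G) = K := by
    rw [commutator_def, Subgroup.map_commutator, ← MonoidHom.range_eq_map]
  have h2 : ⁅K, K⁆ = K := by
    have := congrArg (Subgroup.map F) hG
    rwa [Subgroup.map_commutator, h1] at this
  have hker : K ≤ Equiv.Perm.sign.ker := by
    calc K ≤ commutator (Equiv.Perm (Fin 3)) := by
            rw [commutator_def]; exact Subgroup.commutator_mono le_top le_top
      _ ≤ _ := Abelianization.commutator_subset_ker _
  have hbot : ⁅K, K⁆ ≤ ⊥ := by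
    rw [Subgroup.commutator_le]
    intro g hg h hh
    have hcomm := gvb_sign_one_comm g h (hker hg) (hker hh)
    simp [commutatorElement_def, hcomm]
  have hmem : ⁅F a, F b⁆ ∈ K :=
    Subgroup.commutator_mem_commutator ⟨a, rfl⟩ ⟨b, rfl⟩
  rw [← h2] at hmem
  have := hbot hmem
  rw [Subgroup.mem_bot, ha, hb] at this
  exact gvb_swap_comm_ne this

/-- Target assignment for the generators of `GVB n` in `S₃`. -/
private def gvbGfun (n : ℕ) (k : Fin (n-1)) : Equiv.Perm (Fin 3) :=
  if (k : ℕ) % 2 = 0 then Equiv.swap 0 1 else Equiv.swap 1 2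

private def gvbFfun (n : ℕ) : Fin (n-1) ⊕ Fin (n-1) → Equiv.Perm (Fin 3) :=
  Sum.elim (gvbGfun n) (gvbGfun n)

private lemma gvbRelsHold3 : ∀ r ∈ gvbRels 3, FreeGroup.lift (gvbFfun 3) r = 1 := by
  intro r hr
  simp only [gvbRels, Set.mem_union, Set.mem_setOf_eq] at hr
  rcases hr with ((((((⟨i,j,hij,rfl⟩|⟨i,j,hij,rfl⟩)|⟨i,j,hij,rfl⟩)|⟨i,j,hij,rfl⟩)|⟨i,j,hij,rfl⟩)|⟨i,j,hij,rfl⟩)|⟨i,j,hij,rfl⟩) <;>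
  simp only [σw, ρw, map_mul, map_inv, FreeGroup.lift_apply_of, gvbFfun, Sum.elim_inl, Sum.elim_inr] <;>
  fin_cases i <;> fin_cases j <;> simp_all [gvbGfun] <;> try omega
  all_goals decide

private lemma gvbRelsHold4 : ∀ r ∈ gvbRels 4, FreeGroup.lift (gvbFfun 4) r = 1 := by
  intro r hr
  simp only [gvbRels, Set.mem_union, Set.mem_setOf_eq] at hr
  rcases hr with ((((((⟨i,j,hij,rfl⟩|⟨i,j,hij,rfl⟩)|⟨i,j,hij,rfl⟩)|⟨i,j,hij,rfl⟩)|⟨i,j,hij,rfl⟩)|⟨i,j,hij,rfl⟩)|⟨i,j,hij,rfl⟩) <;>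
  simp only [σw, ρw, map_mul, map_inv, FreeGroup.lift_apply_of, gvbFfun, Sum.elim_inl, Sum.elim_inr] <;>
  fin_cases i <;> fin_cases j <;> simp_all [gvbGfun] <;> try omega
  all_goals decide

end GVBAux


open GenVirtBraid in
/-- The commutator subgroups of `GVB_3` and `GVB_4` are not perfect groups. -/
theorem gvb3_gvb4_commutator_not_perfect :
    ⁅commutator (GVB 3), commutator (GVB 3)⁆ ≠ commutator (GVB 3) ∧
    ⁅commutator (GVB 4), commutator (GVB 4)⁆ ≠ commutator (GVB 4) := by
  constructor
  · exact gvb_not_perfect_aux (PresentedGroup.toGroup gvbRelsHold3) (σ 3 0) (σ 3 1)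
      (by simp [σ, PresentedGroup.toGroup.of, gvbFfun, gvbGfun])
      (by simp [σ, PresentedGroup.toGroup.of, gvbFfun, gvbGfun])
  · exact gvb_not_perfect_aux (PresentedGroup.toGroup gvbRelsHold4) (σ 4 0) (σ 4 1)
      (by simp [σ, PresentedGroup.toGroup.of, gvbFfun, gvbGfun])
      (by simp [σ, PresentedGroup.toGroup.of, gvbFfun, gvbGfun])
end
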